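/- arXiv:quant-ph/0302138 — 3 statements merged into one kernel-verified Lean document; each statement's English description precedes it below -/
import Mathlib

section
/- At time T = (π/2)·√N, the analog quantum search reaches the marked state up to a global phase: exp(−i·(H_0 + H_f)·T)|s⟩ = i·e^{−iT}·|m⟩. -/
open scoped Real

/-- The rank-one projector `|ψ⟩⟨ψ|`, mapping `v` to `⟪ψ, v⟫ • ψ`. -/
noncomputable def proj {H : Type*} [NormedAddCommGroup H] [InnerProductSpace ℂ H]
    (ψ : H) : H →L[ℂ] H := (innerSL ℂ ψ).smulRight ψ

/-- The uniform superposition `|s⟩ = (1/√N) ∑_x |x⟩`. -/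
noncomputable def uniformState (N : ℕ) : EuclideanSpace ℂ (Fin N) :=
  ((1 / Real.sqrt N : ℝ) : ℂ) • ∑ x : Fin N, EuclideanSpace.single x (1 : ℂ)

/-- If `v` is an eigenvector of `B` with eigenvalue `μ`, then `exp(B) v = e^μ v`. -/
lemma exp_apply_eigen {H : Type*} [NormedAddCommGroup H] [InnerProductSpace ℂ H]
    [CompleteSpace H] (B : H →L[ℂ] H) (v : H) (μ : ℂ) (h : B v = μ • v) :
    NormedSpace.exp B v = Complex.exp μ • v := by
  have hpow : ∀ n : ℕ, (B ^ n) v = μ ^ n • v := by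
    intro n
    induction n with
    | zero => simp
    | succ k ih =>
      rw [pow_succ, ContinuousLinearMap.mul_apply, h, map_smul, ih, smul_smul,
        ← pow_succ']
  have hsum : Summable fun n : ℕ => ((n.factorial : ℂ))⁻¹ • B ^ n :=
    NormedSpace.expSeries_summable' B
  have hrw : NormedSpace.exp B v =
      ∑' n : ℕ, (((n.factorial : ℂ))⁻¹ • B ^ n) v := by
    rw [NormedSpace.exp_eq_tsum (𝕂 := ℂ)]
    exact ((ContinuousLinearMap.apply ℂ H v).map_tsum hsum)
  rw [hrw]
  have h2 : ∀ n : ℕ, (((n.factorial : ℂ))⁻¹ • B ^ n) v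
      = (((n.factorial : ℂ))⁻¹ * μ ^ n) • v := by
    intro n
    rw [ContinuousLinearMap.smul_apply, hpow, smul_smul]
  simp_rw [h2]
  rw [Summable.tsum_smul_const]
  · congr 1
    rw [Complex.exp_eq_exp_ℂ, NormedSpace.exp_eq_tsum (𝕂 := ℂ)]
    simp [smul_eq_mul]
  · simpa [smul_eq_mul] using NormedSpace.expSeries_summable' (𝕂 := ℂ) μ

/-- At time `T = (π/2)√N`, the analog quantum search (evolution under
`H⁰ + H_f` with `H⁰ = I − |s⟩⟨s|`, `H_f = I − |m⟩⟨m|`, starting from `|s⟩`)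
reaches the marked state up to a global phase:
`exp(−i(H⁰+H_f)T)|s⟩ = i e^{−iT} |m⟩`. -/
theorem exp_analogSearch_at_final_time (N : ℕ) (hN : 2 ≤ N) (m : Fin N)
    (T : ℝ) (hT : T = (π / 2) * Real.sqrt N) :
    (NormedSpace.exp
      ((-(Complex.I * (T : ℂ))) •
        (((1 : EuclideanSpace ℂ (Fin N) →L[ℂ] EuclideanSpace ℂ (Fin N)) -
            proj (uniformState N)) +
          ((1 : EuclideanSpace ℂ (Fin N) →L[ℂ] EuclideanSpace ℂ (Fin N)) -
            proj (EuclideanSpace.single m 1)))) :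
      EuclideanSpace ℂ (Fin N) →L[ℂ] EuclideanSpace ℂ (Fin N))
      (uniformState N) =
    (Complex.I * Complex.exp (-(Complex.I * (T : ℂ)))) •
      EuclideanSpace.single m (1 : ℂ) := by
  classical
  set s : EuclideanSpace ℂ (Fin N) := uniformState N with hs_def
  set em : EuclideanSpace ℂ (Fin N) := EuclideanSpace.single m (1 : ℂ) with hem_def
  set c : ℂ := ((1 / Real.sqrt N : ℝ) : ℂ) with hc_def
  set z : ℂ := Complex.I * (T : ℂ) with hz_def
  have hNpos : (0:ℝ) < N := by
    have : (2:ℝ) ≤ N := by exact_mod_cast hN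
    linarith
  have hsqrt : Real.sqrt N * Real.sqrt N = N := Real.mul_self_sqrt hNpos.le
  have hsqrt0 : Real.sqrt N ≠ 0 := by positivity
  have hproj : ∀ ψ v : EuclideanSpace ℂ (Fin N),
      proj ψ v = (inner ℂ ψ v : ℂ) • ψ := fun ψ v => rfl
  have hsumApply : (∑ x : Fin N, EuclideanSpace.single x (1:ℂ)) m
      = ∑ x : Fin N, (EuclideanSpace.single x (1:ℂ)) m :=
    by rw [WithLp.ofLp_sum, Finset.sum_apply]
  have hsm : s m = c := by
    rw [hs_def, uniformState, PiLp.smul_apply, hsumApply]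
    simp [hc_def, EuclideanSpace.single_apply]
  have hmm : (inner ℂ em em : ℂ) = 1 := by
    simp [hem_def, EuclideanSpace.inner_single_left, EuclideanSpace.single_apply]
  have hmsI : (inner ℂ em s : ℂ) = c := by
    rw [hem_def, EuclideanSpace.inner_single_left]
    simp [hsm]
  have hsmI : (inner ℂ s em : ℂ) = c := by
    rw [← inner_conj_symm, hmsI, hc_def, Complex.conj_ofReal]
  have hFF : (inner ℂ (∑ x : Fin N, EuclideanSpace.single x (1 : ℂ))
      (∑ x : Fin N, EuclideanSpace.single x (1 : ℂ)) : ℂ) = N := by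
    rw [sum_inner]
    simp [inner_sum, sum_inner, EuclideanSpace.inner_single_left,
      EuclideanSpace.single_apply]
  have hcc : c * c * (N:ℂ) = 1 := by
    rw [hc_def, ← Complex.ofReal_natCast, ← Complex.ofReal_mul, ← Complex.ofReal_mul,
      Complex.ofReal_eq_one]
    field_simp
    exact (Real.sq_sqrt hNpos.le).symm
  have hss : (inner ℂ s s : ℂ) = 1 := by
    rw [hs_def, uniformState, inner_smul_left, inner_smul_right, hFF,
      Complex.conj_ofReal, ← hc_def, ← mul_assoc]
    exact hcc
  -- the operator A = |s⟩⟨s| + |m⟩⟨m| and its eigenvectors u, w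
  set A : EuclideanSpace ℂ (Fin N) →L[ℂ] EuclideanSpace ℂ (Fin N) :=
    proj s + proj em with hA_def
  set u : EuclideanSpace ℂ (Fin N) := s + em with hu_def
  set w : EuclideanSpace ℂ (Fin N) := s - em with hw_def
  have hAu : A u = (1 + c) • u := by
    rw [hA_def, ContinuousLinearMap.add_apply, hproj, hproj, hu_def,
      inner_add_right, inner_add_right, hss, hsmI, hmsI, hmm]
    module
  have hAw : A w = (1 - c) • w := by
    rw [hA_def, ContinuousLinearMap.add_apply, hproj, hproj, hw_def,
      inner_sub_right, inner_sub_right, hss, hsmI, hmsI, hmm]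
    module
  -- split the Hamiltonian
  have hX : (-z) • (((1 : EuclideanSpace ℂ (Fin N) →L[ℂ] EuclideanSpace ℂ (Fin N)) -
        proj s) + ((1 : EuclideanSpace ℂ (Fin N) →L[ℂ] EuclideanSpace ℂ (Fin N)) -
        proj em))
      = (-(2*z)) • (1 : EuclideanSpace ℂ (Fin N) →L[ℂ] EuclideanSpace ℂ (Fin N))
        + z • A := by
    rw [hA_def]; module
  have hcomm : Commute
      ((-(2*z)) • (1 : EuclideanSpace ℂ (Fin N) →L[ℂ] EuclideanSpace ℂ (Fin N)))
      (z • A) := (Commute.one_left (z • A)).smul_left (-(2*z))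
  rw [hX, NormedSpace.exp_add_of_commute_of_mem_ball (𝕂 := ℂ) hcomm
    ((NormedSpace.expSeries_radius_eq_top ℂ
      (EuclideanSpace ℂ (Fin N) →L[ℂ] EuclideanSpace ℂ (Fin N))).symm ▸ edist_lt_top _ _)
    ((NormedSpace.expSeries_radius_eq_top ℂ
      (EuclideanSpace ℂ (Fin N) →L[ℂ] EuclideanSpace ℂ (Fin N))).symm ▸ edist_lt_top _ _), ContinuousLinearMap.mul_apply]
  -- inner exponential applied to s
  have hs_decomp : s = (1/2 : ℂ) • u + (1/2 : ℂ) • w := by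
    rw [hu_def, hw_def]; module
  have h1 : (z • A) u = (z * (1 + c)) • u := by
    rw [ContinuousLinearMap.smul_apply, hAu, smul_smul]
  have h2 : (z • A) w = (z * (1 - c)) • w := by
    rw [ContinuousLinearMap.smul_apply, hAw, smul_smul]
  have e1 := exp_apply_eigen (z • A) u _ h1
  have e2 := exp_apply_eigen (z • A) w _ h2
  have hY : NormedSpace.exp (z • A) s
      = (1/2 : ℂ) • (Complex.exp (z * (1 + c)) • u)
        + (1/2 : ℂ) • (Complex.exp (z * (1 - c)) • w) := by
    conv_lhs => rw [hs_decomp]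
    rw [map_add, map_smul, map_smul, e1, e2]
  rw [hY]
  -- outer exponential
  have hOuter : ∀ y : EuclideanSpace ℂ (Fin N),
      NormedSpace.exp ((-(2*z)) •
        (1 : EuclideanSpace ℂ (Fin N) →L[ℂ] EuclideanSpace ℂ (Fin N))) y
      = Complex.exp (-(2*z)) • y := by
    intro y
    refine exp_apply_eigen _ y _ ?_
    rw [ContinuousLinearMap.smul_apply, ContinuousLinearMap.one_apply]
  rw [hOuter]
  -- scalar simplifications
  have hTc : (T : ℂ) * c = ((π/2 : ℝ) : ℂ) := by
    rw [hc_def, ← Complex.ofReal_mul, Complex.ofReal_inj, hT]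
    field_simp
  have hzc : z * c = Complex.I * ((π/2 : ℝ) : ℂ) := by
    rw [hz_def, mul_assoc, hTc]
  have hexpI : Complex.exp (Complex.I * ((π/2 : ℝ) : ℂ)) = Complex.I := by
    rw [mul_comm, Complex.exp_mul_I, ← Complex.ofReal_cos, ← Complex.ofReal_sin,
      Real.cos_pi_div_two, Real.sin_pi_div_two]
    simp
  have he1 : Complex.exp (z * (1 + c)) = Complex.I * Complex.exp z := by
    rw [mul_add, mul_one, Complex.exp_add, hzc, hexpI, mul_comm]
  have he2 : Complex.exp (z * (1 - c)) = -(Complex.I * Complex.exp z) := by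
    rw [mul_one_sub, sub_eq_add_neg, Complex.exp_add, Complex.exp_neg, hzc,
      hexpI, Complex.inv_I]
    ring
  have hE : Complex.exp (-(2*z)) * Complex.exp z = Complex.exp (-z) := by
    rw [← Complex.exp_add]; ring_nf
  rw [he1, he2, hu_def, hw_def]
  match_scalars
  · ring
  · linear_combination Complex.I * hE
end

section
/- The operator norm of the difference of the two Hamiltonians satisfies ‖H_0 − H_f‖ = ‖|m⟩⟨m| − |s⟩⟨s|‖ = √(1 − 1/N); in particular ‖H_0 − H_f‖ ≤ 1. -/
open scoped ComplexConjugate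

local notation "⟪" x ", " y "⟫" => @inner ℂ _ _ x y

section Aux

variable {H : Type*} [NormedAddCommGroup H] [InnerProductSpace ℂ H]

lemma proj_apply (ψ v : H) : proj ψ v = ⟪ψ, v⟫ • ψ := rfl

lemma A_apply (e s v : H) :
    (proj e - proj s) v = ⟪e, v⟫ • e - ⟪s, v⟫ • s := rfl

variable (e s : H) (a : ℝ) (he : ⟪e, e⟫ = 1) (hs : ⟪s, s⟫ = 1)
  (hes : ⟪e, s⟫ = (a : ℂ))

include hes in
lemma hse : ⟪s, e⟫ = (a : ℂ) := by
  rw [← inner_conj_symm, hes, Complex.conj_ofReal]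

include he hs hes in
lemma inner_comb (α β γ δ : ℂ) :
    ⟪α • e - β • s, γ • e - δ • s⟫ =
      conj α * γ + conj β * δ - (a : ℂ) * (conj α * δ + conj β * γ) := by
  simp [-inner_self_eq_norm_sq_to_K, inner_sub_left, inner_sub_right, inner_smul_left, inner_smul_right,
    he, hs, hes, hse e s a hes]
  ring

include he hs hes in
lemma A_comb (α β : ℂ) :
    (proj e - proj s) (α • e - β • s) = (α - a * β) • e - (a * α - β) • s := by
  rw [A_apply]
  have h1 : ⟪e, α • e - β • s⟫ = α - a * β := by
    simp [-inner_self_eq_norm_sq_to_K, inner_sub_right, inner_smul_right, he, hes]; ring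
  have h2 : ⟪s, α • e - β • s⟫ = a * α - β := by
    simp [-inner_self_eq_norm_sq_to_K, inner_sub_right, inner_smul_right, hs, hse e s a hes]; ring
  rw [h1, h2]

include he hs hes in
lemma key_inner (α β : ℂ) :
    ⟪(proj e - proj s) (α • e - β • s), (proj e - proj s) (α • e - β • s)⟫ =
      ((1 - a ^ 2 : ℝ) : ℂ) * ⟪α • e - β • s, α • e - β • s⟫ := by
  rw [A_comb e s a he hs hes, inner_comb e s a he hs hes, inner_comb e s a he hs hes]
  simp only [map_sub, map_mul, Complex.conj_ofReal]
  push_cast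
  ring

include he hs hes in
lemma norm_A_comb (α β : ℂ) :
    ‖(proj e - proj s) (α • e - β • s)‖ ^ 2 =
      (1 - a ^ 2) * ‖α • e - β • s‖ ^ 2 := by
  have h := key_inner e s a he hs hes α β
  rw [@inner_self_eq_norm_sq_to_K ℂ, @inner_self_eq_norm_sq_to_K ℂ] at h
  have h2 : ((‖(proj e - proj s) (α • e - β • s)‖ ^ 2 : ℝ) : ℂ) =
      (((1 - a ^ 2) * ‖α • e - β • s‖ ^ 2 : ℝ) : ℂ) := by push_cast at h ⊢; exact h
  exact_mod_cast h2

lemma A_selfAdjoint (x y : H) :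
    ⟪(proj e - proj s) x, y⟫ = ⟪x, (proj e - proj s) y⟫ := by
  simp only [A_apply, inner_sub_left, inner_sub_right, inner_smul_left, inner_smul_right,
    inner_conj_symm]
  ring

include he hs hes in
lemma norm_A_le (ha : a ^ 2 ≤ 1) (v : H) :
    ‖(proj e - proj s) v‖ ≤ Real.sqrt (1 - a ^ 2) * ‖v‖ := by
  by_cases h0 : ‖(proj e - proj s) v‖ = 0
  · rw [h0]
    positivity
  have hsq : 0 ≤ 1 - a ^ 2 := by linarith
  have hAv : (proj e - proj s) v = ⟪e, v⟫ • e - ⟪s, v⟫ • s := A_apply e s v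
  have hAu : ‖(proj e - proj s) ((proj e - proj s) v)‖ ^ 2 =
      (1 - a ^ 2) * ‖(proj e - proj s) v‖ ^ 2 := by
    rw [hAv]; exact norm_A_comb e s a he hs hes _ _
  have hAu' : ‖(proj e - proj s) ((proj e - proj s) v)‖ =
      Real.sqrt (1 - a ^ 2) * ‖(proj e - proj s) v‖ := by
    have h := Real.sqrt_sq (norm_nonneg ((proj e - proj s) ((proj e - proj s) v)))
    rw [← h, hAu, Real.sqrt_mul hsq, Real.sqrt_sq (norm_nonneg _)]
  have h1 : ‖(proj e - proj s) v‖ ^ 2 =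
      Complex.re ⟪v, (proj e - proj s) ((proj e - proj s) v)⟫ := by
    rw [← A_selfAdjoint e s v ((proj e - proj s) v)]
    have h := @inner_self_eq_norm_sq ℂ _ _ _ _ ((proj e - proj s) v)
    rw [RCLike.re_to_complex] at h
    exact h.symm
  have h2 : Complex.re ⟪v, (proj e - proj s) ((proj e - proj s) v)⟫ ≤
      ‖v‖ * ‖(proj e - proj s) ((proj e - proj s) v)‖ := by
    calc Complex.re ⟪v, (proj e - proj s) ((proj e - proj s) v)⟫
        ≤ ‖⟪v, (proj e - proj s) ((proj e - proj s) v)⟫‖ := Complex.re_le_norm _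
      _ ≤ ‖v‖ * ‖(proj e - proj s) ((proj e - proj s) v)‖ := norm_inner_le_norm _ _
  have h3 : ‖(proj e - proj s) v‖ ^ 2 ≤
      ‖v‖ * (Real.sqrt (1 - a ^ 2) * ‖(proj e - proj s) v‖) := by
    rw [← hAu']; linarith [h1, h2]
  have hupos : 0 < ‖(proj e - proj s) v‖ := lt_of_le_of_ne (norm_nonneg _) (Ne.symm h0)
  nlinarith [hupos]

include he hs hes in
lemma opNorm_proj_sub (ha : a ^ 2 ≤ 1) :
    ‖proj e - proj s‖ = Real.sqrt (1 - a ^ 2) := by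
  have hsq : 0 ≤ 1 - a ^ 2 := by linarith
  apply le_antisymm
  · exact (proj e - proj s).opNorm_le_bound (Real.sqrt_nonneg _)
      (norm_A_le e s a he hs hes ha)
  · -- lower bound via v = e
    have hne1 : ‖e‖ ^ 2 = 1 := by
      have h := @inner_self_eq_norm_sq_to_K ℂ _ _ _ _ e
      rw [he] at h
      have h2 : ((‖e‖ ^ 2 : ℝ) : ℂ) = ((1 : ℝ) : ℂ) := by push_cast; exact h.symm
      exact_mod_cast h2
    have hne : ‖e‖ = 1 := by
      have h := Real.sqrt_sq (norm_nonneg e)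
      rw [← h, hne1, Real.sqrt_one]
    have hAe : (proj e - proj s) e = (1 : ℂ) • e - (a : ℂ) • s := by
      rw [A_apply, he, hse e s a hes]
    have hnAe : ‖(proj e - proj s) e‖ ^ 2 = 1 - a ^ 2 := by
      rw [hAe]
      have h := inner_comb e s a he hs hes 1 (a : ℂ) 1 (a : ℂ)
      rw [@inner_self_eq_norm_sq_to_K ℂ] at h
      have h2 : ((‖(1 : ℂ) • e - (a : ℂ) • s‖ ^ 2 : ℝ) : ℂ) = ((1 - a ^ 2 : ℝ) : ℂ) := by
        push_cast
        exact h.trans (by simp [Complex.conj_ofReal]; ring)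
      exact_mod_cast h2
    have hnAe' : ‖(proj e - proj s) e‖ = Real.sqrt (1 - a ^ 2) := by
      rw [← Real.sqrt_sq (norm_nonneg ((proj e - proj s) e)), hnAe]
    calc Real.sqrt (1 - a ^ 2) = ‖(proj e - proj s) e‖ := hnAe'.symm
      _ ≤ ‖proj e - proj s‖ * ‖e‖ := (proj e - proj s).le_opNorm e
      _ = ‖proj e - proj s‖ := by rw [hne, mul_one]

end Aux

section Euclid

variable {N : ℕ}

lemma inner_e_e (m : Fin N) :
    ⟪EuclideanSpace.single m (1 : ℂ), EuclideanSpace.single m (1 : ℂ)⟫ = 1 := by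
  simp [EuclideanSpace.inner_single_left, EuclideanSpace.single_apply]

lemma inner_e_s (_hN : 0 < N) (m : Fin N) :
    ⟪EuclideanSpace.single m (1 : ℂ), uniformState N⟫ =
      ((1 / Real.sqrt N : ℝ) : ℂ) := by
  rw [uniformState, inner_smul_right, inner_sum]
  simp [EuclideanSpace.inner_single_left, EuclideanSpace.single_apply]

lemma inner_s_s (hN : 0 < N) :
    ⟪uniformState N, uniformState N⟫ = 1 := by
  have hsum : ⟪(∑ x : Fin N, EuclideanSpace.single x (1:ℂ)),
      (∑ x : Fin N, EuclideanSpace.single x (1:ℂ))⟫ = (N : ℂ) := by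
    rw [inner_sum]
    simp [sum_inner, EuclideanSpace.inner_single_left, EuclideanSpace.single_apply]
  rw [uniformState, inner_smul_left, inner_smul_right, hsum, Complex.conj_ofReal]
  rw [← Complex.ofReal_natCast, ← Complex.ofReal_mul, ← Complex.ofReal_mul,
    ← Complex.ofReal_one]
  congr 1
  have hss : Real.sqrt N * Real.sqrt N = (N : ℝ) := Real.mul_self_sqrt (Nat.cast_nonneg N)
  have hpos : (0 : ℝ) < Real.sqrt N := Real.sqrt_pos.mpr (by exact_mod_cast hN)
  have hr : (1 / Real.sqrt N) * ((1 / Real.sqrt N) * (N : ℝ)) =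
      (N : ℝ) / (Real.sqrt N * Real.sqrt N) := by ring
  rw [hr, hss, div_self (by exact_mod_cast hN.ne')]

end Euclid

/-- `‖H⁰ − H_f‖ = ‖|m⟩⟨m| − |s⟩⟨s|‖ = √(1 − 1/N)`, where `H⁰ = I − |s⟩⟨s|`
and `H_f = I − |m⟩⟨m|`; in particular `‖H⁰ − H_f‖ ≤ 1`. -/
theorem norm_sub_searchHamiltonians (N : ℕ) (hN : 2 ≤ N) (m : Fin N)
    (H0 Hf : EuclideanSpace ℂ (Fin N) →L[ℂ] EuclideanSpace ℂ (Fin N))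
    (hH0 : H0 = 1 - proj (uniformState N))
    (hHf : Hf = 1 - proj (EuclideanSpace.single m 1)) :
    ‖H0 - Hf‖ = ‖proj (EuclideanSpace.single m (1:ℂ)) - proj (uniformState N)‖ ∧
    ‖H0 - Hf‖ = Real.sqrt (1 - 1 / N) ∧
    ‖H0 - Hf‖ ≤ 1 := by
  have hN0 : 0 < N := lt_of_lt_of_le (by norm_num) hN
  have hNR : (0 : ℝ) < N := by exact_mod_cast hN0
  have hdiff : H0 - Hf = proj (EuclideanSpace.single m (1:ℂ)) - proj (uniformState N) := by
    rw [hH0, hHf]; abel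
  have ha2 : (1 / Real.sqrt N : ℝ) ^ 2 = 1 / N := by
    rw [div_pow, one_pow, Real.sq_sqrt (le_of_lt hNR)]
  have ha2le : (1 / Real.sqrt N : ℝ) ^ 2 ≤ 1 := by
    rw [ha2]
    rw [div_le_one hNR]
    exact_mod_cast hN0
  have hkey : ‖proj (EuclideanSpace.single m (1:ℂ)) - proj (uniformState N)‖ =
      Real.sqrt (1 - 1 / N) := by
    rw [← ha2]
    exact opNorm_proj_sub _ _ (1 / Real.sqrt N) (inner_e_e m) (inner_s_s hN0)
      (inner_e_s hN0 m) ha2le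
  refine ⟨by rw [hdiff], ?_, ?_⟩
  · rw [hdiff, hkey]
  · rw [hdiff, hkey]
    have h1 : (1 : ℝ) - 1 / N ≤ 1 := by
      have : (0:ℝ) < 1 / N := by positivity
      linarith
    calc Real.sqrt (1 - 1 / N) ≤ Real.sqrt 1 := Real.sqrt_le_sqrt h1
      _ = 1 := Real.sqrt_one
end

section
/- For every s with 0 < s ≤ 1, the vector |E₁;s⟩ = [√N·(E₀(s) − s)·|s⟩ + s·|m⟩] / √(E₀(s)² + (N−1)·(E₀(s) − s)²) is a unit vector and is an eigenvector of H(s) with eigenvalue E₁(s), i.e. H(s)|E₁;s⟩ = E₁(s)·|E₁;s⟩ and ‖|E₁;s⟩‖ = 1. -/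
set_option maxHeartbeats 1000000


/-- Ground-state energy of the interpolating search Hamiltonian. -/
noncomputable def E₀ (N : ℕ) (s : ℝ) : ℝ :=
  (1 - Real.sqrt (1 - 4 * ((N - 1 : ℝ) / N) * s * (1 - s))) / 2

/-- Excited-state energy of the interpolating search Hamiltonian. -/
noncomputable def E₁ (N : ℕ) (s : ℝ) : ℝ :=
  (1 + Real.sqrt (1 - 4 * ((N - 1 : ℝ) / N) * s * (1 - s))) / 2

open scoped InnerProductSpace

lemma sum_single_apply (N : ℕ) (m : Fin N) :
    (∑ x : Fin N, EuclideanSpace.single x (1:ℂ)) m = 1 := by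
  classical
  rw [WithLp.ofLp_sum, Finset.sum_apply]
  simp [EuclideanSpace.single_apply]

lemma inner_e_u (N : ℕ) (m : Fin N) :
    ⟪EuclideanSpace.single m (1:ℂ), uniformState N⟫_ℂ = ((1 / Real.sqrt N : ℝ) : ℂ) := by
  simp [uniformState, inner_smul_right, EuclideanSpace.inner_single_left, sum_single_apply]

lemma inner_u_e (N : ℕ) (m : Fin N) :
    ⟪uniformState N, EuclideanSpace.single m (1:ℂ)⟫_ℂ = ((1 / Real.sqrt N : ℝ) : ℂ) := by
  simp [uniformState, inner_smul_left, EuclideanSpace.inner_single_right, Complex.conj_ofReal,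
    sum_single_apply]

lemma inner_u_u (N : ℕ) (hN : 0 < N) :
    ⟪uniformState N, uniformState N⟫_ℂ = 1 := by
  have hNpos : (0:ℝ) < N := by exact_mod_cast hN
  have h : ⟪(∑ x : Fin N, EuclideanSpace.single x (1:ℂ)),
      (∑ x : Fin N, EuclideanSpace.single x (1:ℂ))⟫_ℂ = (N : ℂ) := by
    rw [sum_inner]
    simp [EuclideanSpace.inner_single_left, sum_single_apply]
  rw [uniformState, inner_smul_left, inner_smul_right, h, Complex.conj_ofReal]
  rw [show ((1 / Real.sqrt N : ℝ) : ℂ) * (((1 / Real.sqrt N : ℝ) : ℂ) * (N:ℂ))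
      = (((1 / Real.sqrt N) * ((1 / Real.sqrt N) * N) : ℝ) : ℂ) by push_cast; ring]
  rw [show (1 / Real.sqrt N) * ((1 / Real.sqrt N) * N) = (N / (Real.sqrt N * Real.sqrt N) : ℝ) by
    ring]
  rw [Real.mul_self_sqrt hNpos.le, div_self hNpos.ne']
  norm_num

lemma proj_apply_s10 {H : Type*} [NormedAddCommGroup H] [InnerProductSpace ℂ H]
    (ψ φ : H) : proj ψ φ = ⟪ψ, φ⟫_ℂ • ψ := rfl

/-- For the interpolating Hamiltonian `H(s) = (1−s)(I−|s⟩⟨s|) + s(I−|m⟩⟨m|)` of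
the adiabatic quantum search, for every `s` with `0 < s ≤ 1` the vector
`|E₁;s⟩ = [√N(E₀(s)−s)|s⟩ + s|m⟩] / √(E₀(s)² + (N−1)(E₀(s)−s)²)` is a unit
eigenvector of `H(s)` with eigenvalue `E₁(s)`. -/

theorem excitedState_interpolatingHamiltonian (N : ℕ) (hN : 2 ≤ N) (m : Fin N)
    (s : ℝ) (hs : s ∈ Set.Ioc (0:ℝ) 1)
    (Hs : EuclideanSpace ℂ (Fin N) →L[ℂ] EuclideanSpace ℂ (Fin N))
    (hHs : Hs = ((1 - s : ℝ) : ℂ) • (1 - proj (uniformState N)) +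
      ((s : ℝ) : ℂ) • (1 - proj (EuclideanSpace.single m 1)))
    (v : EuclideanSpace ℂ (Fin N))
    (hv : v = ((1 / Real.sqrt ((E₀ N s)^2 + (N - 1 : ℝ) * (E₀ N s - s)^2) : ℝ) : ℂ) •
      (((Real.sqrt N * (E₀ N s - s) : ℝ) : ℂ) • uniformState N +
        ((s : ℝ) : ℂ) • EuclideanSpace.single m (1 : ℂ))) :
    Hs v = ((E₁ N s : ℝ) : ℂ) • v ∧ ‖v‖ = 1 := by
  obtain ⟨hs0, hs1⟩ := hs
  have hN2 : (2:ℝ) ≤ (N:ℝ) := by exact_mod_cast hN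
  have hNpos : (0:ℝ) < N := by linarith
  set r : ℝ := Real.sqrt N with hrdef
  have hrpos : 0 < r := Real.sqrt_pos.mpr hNpos
  have hrne : r ≠ 0 := hrpos.ne'
  have hr2 : r * r = N := Real.mul_self_sqrt hNpos.le
  set E : ℝ := E₀ N s with hEdef
  have ht0 : (0:ℝ) ≤ s * (1 - s) := mul_nonneg hs0.le (by linarith)
  have hk0 : (0:ℝ) ≤ (N - 1 : ℝ) / N := div_nonneg (by linarith) hNpos.le
  have hk1 : (N - 1 : ℝ) / N ≤ 1 := by rw [div_le_one hNpos]; linarith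
  have hD : (0:ℝ) ≤ 1 - 4 * ((N - 1 : ℝ) / N) * s * (1 - s) := by
    nlinarith [sq_nonneg (1 - 2*s)]
  have hEid : E * (1 - E) = ((N - 1 : ℝ) / N) * s * (1 - s) := by
    have h := Real.sq_sqrt hD
    simp only [hEdef, E₀]
    linear_combination (-1/4 : ℝ) * h
  have hEidN : (N:ℝ) * (E * (1 - E)) = ((N:ℝ) - 1) * (s * (1 - s)) := by
    rw [hEid]; field_simp
  have hE1 : E₁ N s = 1 - E := by
    simp only [hEdef, E₀, E₁]; ring
  -- positivity of the normalization constant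
  have hQ0 : 0 < E ^ 2 + ((N:ℝ) - 1) * (E - s) ^ 2 := by
    by_contra h
    push_neg at h
    have hE2 : E ^ 2 ≤ 0 := by nlinarith [sq_nonneg (E - s)]
    have hE0 : E = 0 := pow_eq_zero_iff (two_ne_zero) |>.mp (le_antisymm hE2 (sq_nonneg E))
    have hEs2 : (E - s) ^ 2 ≤ 0 := by nlinarith [sq_nonneg E]
    have hEs0 : E - s = 0 :=
      pow_eq_zero_iff (two_ne_zero) |>.mp (le_antisymm hEs2 (sq_nonneg (E - s)))
    nlinarith
  have hsqQpos : 0 < Real.sqrt (E ^ 2 + ((N:ℝ) - 1) * (E - s) ^ 2) := Real.sqrt_pos.mpr hQ0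
  have hsqQ : Real.sqrt (E ^ 2 + ((N:ℝ) - 1) * (E - s) ^ 2)
      * Real.sqrt (E ^ 2 + ((N:ℝ) - 1) * (E - s) ^ 2)
      = E ^ 2 + ((N:ℝ) - 1) * (E - s) ^ 2 := Real.mul_self_sqrt hQ0.le
  -- scalar identities (real)
  have h1r : r * (1/r) = 1 := mul_one_div_cancel hrne
  have rid1 : (1 - s) * (r * (E - s) + s * (1/r)) = E * (r * (E - s)) := by
    have h0 : r * ((1 - s) * (r * (E - s) + s * (1/r)) - E * (r * (E - s))) = 0 := by
      linear_combination ((1 - s - E) * (E - s)) * hr2 + hEidN + (s * (1 - s)) * h1r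
    rcases mul_eq_zero.mp h0 with h | h
    · exact absurd h hrne
    · linarith
  have rid2 : s * (r * (E - s) * (1/r) + s) = E * s := by
    linear_combination (s * (E - s)) * h1r
  have rnorm : (r * (E - s)) * (r * (E - s)) + (r * (E - s)) * (s * (1/r))
      + (s * (r * (E - s)) * (1/r) + s * s) = E ^ 2 + ((N:ℝ) - 1) * (E - s) ^ 2 := by
    linear_combination ((E - s)^2) * hr2 + (2 * s * (E - s)) * h1r
  -- vectors and inner products
  set u : EuclideanSpace ℂ (Fin N) := uniformState N with hudef
  set e : EuclideanSpace ℂ (Fin N) := EuclideanSpace.single m (1:ℂ) with hedef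
  set a : ℂ := ((r * (E - s) : ℝ) : ℂ) with hadef
  set b : ℂ := ((s : ℝ) : ℂ) with hbdef
  have huu : ⟪u, u⟫_ℂ = 1 := inner_u_u N (by omega)
  have hue : ⟪u, e⟫_ℂ = ((1/r : ℝ) : ℂ) := inner_u_e N m
  have heu : ⟪e, u⟫_ℂ = ((1/r : ℝ) : ℂ) := inner_e_u N m
  have hee : ⟪e, e⟫_ℂ = 1 := by
    simp [hedef, EuclideanSpace.inner_single_left]
  have hiu : ⟪u, a • u + b • e⟫_ℂ = a + b * ((1/r : ℝ) : ℂ) := by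
    rw [inner_add_right, inner_smul_right, inner_smul_right, huu, hue]; ring
  have hie : ⟪e, a • u + b • e⟫_ℂ = a * ((1/r : ℝ) : ℂ) + b := by
    rw [inner_add_right, inner_smul_right, inner_smul_right, heu, hee]; ring
  -- complex scalar identities
  have c1 : ((1 - s : ℝ) : ℂ) * (a + b * ((1/r : ℝ) : ℂ)) = ((E : ℝ) : ℂ) * a := by
    rw [hadef, hbdef]
    exact_mod_cast congrArg (Complex.ofReal) rid1
  have c2 : ((s : ℝ) : ℂ) * (a * ((1/r : ℝ) : ℂ) + b) = ((E : ℝ) : ℂ) * b := by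
    rw [hadef, hbdef]
    exact_mod_cast congrArg (Complex.ofReal) rid2
  have hE1c : ((E₁ N s : ℝ) : ℂ) = 1 - ((E : ℝ) : ℂ) := by
    rw [hE1]; push_cast; ring
  -- eigenvector equation for the unnormalized vector
  have key : Hs (a • u + b • e) = ((E₁ N s : ℝ) : ℂ) • (a • u + b • e) := by
    rw [hHs]
    simp only [ContinuousLinearMap.add_apply, ContinuousLinearMap.smul_apply,
      ContinuousLinearMap.sub_apply, ContinuousLinearMap.one_apply, proj_apply_s10,
      hiu, hie, hE1c]
    have e1 : ((1 - s : ℝ) : ℂ) • ((a • u + b • e) - (a + b * ((1/r : ℝ) : ℂ)) • u)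
        = ((1 - s : ℝ) : ℂ) • (a • u + b • e) - (((E : ℝ) : ℂ) * a) • u := by
      rw [smul_sub, smul_smul, c1]
    have e2 : ((s : ℝ) : ℂ) • ((a • u + b • e) - (a * ((1/r : ℝ) : ℂ) + b) • e)
        = ((s : ℝ) : ℂ) • (a • u + b • e) - (((E : ℝ) : ℂ) * b) • e := by
      rw [smul_sub, smul_smul, c2]
    rw [e1, e2]
    have hsplit : ((1 - s : ℝ) : ℂ) = 1 - ((s : ℝ) : ℂ) := by push_cast; ring
    rw [hsplit]
    module
  refine ⟨?_, ?_⟩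
  · rw [hv, map_smul, key, smul_comm]
  · -- norm computation
    have hww : ⟪a • u + b • e, a • u + b • e⟫_ℂ
        = ((E ^ 2 + ((N:ℝ) - 1) * (E - s) ^ 2 : ℝ) : ℂ) := by
      simp only [hadef, hbdef, inner_add_left, inner_add_right, inner_smul_left,
        inner_smul_right, huu, hue, heu, hee, Complex.conj_ofReal]
      have rnormC := congrArg (Complex.ofReal) rnorm
      push_cast at rnormC ⊢
      linear_combination rnormC
    have hnw : ‖a • u + b • e‖ = Real.sqrt (E ^ 2 + ((N:ℝ) - 1) * (E - s) ^ 2) := by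
      rw [@norm_eq_sqrt_re_inner ℂ, hww]
      norm_num [← Complex.ofReal_sub, ← Complex.ofReal_pow, Complex.ofReal_re]
    rw [hv, norm_smul, hnw, Complex.norm_real, Real.norm_eq_abs,
      abs_of_pos (by positivity)]
    rw [one_div, inv_mul_cancel₀ hsqQpos.ne']
end
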